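/- Performance difference between transition kernels: for a policy π and two transition kernel families P and P̂ with the same rewards, V₁^{π,P̂}(s₁) − V₁^{π,P}(s₁) = E_{π,P}[ ∑_{h=1}^{H−1} ((P̂_h − P_h) • V_{h+1}^{π,P̂})(s_h, a_h) ], where the expectation is over trajectories generated by π under kernels P starting from s₁, and (K • f)(s,a) = ∑_{s'} K(s'|s,a) f(s'). -/

import Mathlib

open Finset

variable {S A : Type*}

/-- Auxiliary backward value recursion: `valAux P r π k h s` is the value at stage `h`,
state `s`, with `k` stages remaining (including `h`). -/
noncomputable def valAux [Fintype S] [Fintype A] (P : ℕ → S → A → S → ℝ)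
    (r : ℕ → S → A → ℝ) (π : ℕ → S → A → ℝ) : ℕ → ℕ → S → ℝ
  | 0, _, _ => 0
  | k + 1, h, s => ∑ a, π h s a *
      (r h s a + ∑ s', P h s a s' * valAux P r π k (h + 1) s')

/-- Value function `V_h^{π,r,P}(s)` in an `H`-horizon MDP (stages `1,…,H`). -/
noncomputable def Val [Fintype S] [Fintype A] (H : ℕ) (P : ℕ → S → A → S → ℝ)
    (r : ℕ → S → A → ℝ) (π : ℕ → S → A → ℝ) (h : ℕ) (s : S) : ℝ :=
  valAux P r π (H + 1 - h) h s

/-- Q-value function `Q_h^{π,r,P}(s,a)`; satisfies Bellman's equation, with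
`Val H P r π (H+1) = 0`, so `Q_H = r_H`. -/
noncomputable def Qval [Fintype S] [Fintype A] (H : ℕ) (P : ℕ → S → A → S → ℝ)
    (r : ℕ → S → A → ℝ) (π : ℕ → S → A → ℝ) (h : ℕ) (s : S) (a : A) : ℝ :=
  r h s a + ∑ s', P h s a s' * Val H P r π (h + 1) s'

/-- State distribution `μ_h^{π,P,s₁}` at stage `h` induced by policy `π` and kernels `P`
from initial state `s₁`. -/
noncomputable def occup [Fintype S] [Fintype A] [DecidableEq S]
    (P : ℕ → S → A → S → ℝ) (π : ℕ → S → A → ℝ) (s₁ : S) : ℕ → S → ℝ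
  | 0, _ => 0
  | 1, s => if s = s₁ then 1 else 0
  | h + 2, s' => ∑ s, ∑ a, occup P π s₁ (h + 1) s * π (h + 1) s a * P (h + 1) s a s'

lemma Val_bellman [Fintype S] [Fintype A] (H : ℕ) (P : ℕ → S → A → S → ℝ)
    (r : ℕ → S → A → ℝ) (π : ℕ → S → A → ℝ) (h : ℕ) (hh : h ≤ H) (s : S) :
    Val H P r π h s = ∑ a, π h s a *
      (r h s a + ∑ s', P h s a s' * Val H P r π (h + 1) s') := by
  unfold Val
  have h1 : H + 1 - h = (H - h) + 1 := by omega
  have h2 : H + 1 - (h + 1) = H - h := by omega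
  rw [h1, h2, valAux]

lemma Val_top [Fintype S] [Fintype A] (H : ℕ) (P : ℕ → S → A → S → ℝ)
    (r : ℕ → S → A → ℝ) (π : ℕ → S → A → ℝ) (s : S) :
    Val H P r π H s = ∑ a, π H s a * r H s a := by
  rw [Val_bellman H P r π H le_rfl s]
  have : ∀ s' : S, Val H P r π (H + 1) s' = 0 := by
    intro s'; simp [Val, Nat.sub_self, valAux]
  simp [this]

lemma tele_step [Fintype S] [Fintype A] [DecidableEq S] (H : ℕ)
    (P Phat : ℕ → S → A → S → ℝ) (r : ℕ → S → A → ℝ) (π : ℕ → S → A → ℝ)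
    (s₁ : S) (m : ℕ) (hm : 1 ≤ m) (hmH : m + 1 ≤ H) :
    ∑ s, occup P π s₁ m s * (Val H Phat r π m s - Val H P r π m s)
      = (∑ s, occup P π s₁ m s * ∑ a, π m s a *
          ∑ s', (Phat m s a s' - P m s a s') * Val H Phat r π (m + 1) s')
      + ∑ s', occup P π s₁ (m + 1) s' *
          (Val H Phat r π (m + 1) s' - Val H P r π (m + 1) s') := by
  obtain ⟨n, rfl⟩ : ∃ n, m = n + 1 := ⟨m - 1, by omega⟩
  have hocc : ∀ s' : S, occup P π s₁ (n + 1 + 1) s' =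
      ∑ s, ∑ a, occup P π s₁ (n + 1) s * π (n + 1) s a * P (n + 1) s a s' := by
    intro s'; rfl
  have hb1 := Val_bellman H Phat r π (n + 1) (by omega)
  have hb2 := Val_bellman H P r π (n + 1) (by omega)
  have key : ∀ (s : S) (a : A), occup P π s₁ (n + 1) s *
      (π (n + 1) s a * (r (n + 1) s a +
          ∑ s', Phat (n + 1) s a s' * Val H Phat r π (n + 1 + 1) s')
       - π (n + 1) s a * (r (n + 1) s a +
          ∑ s', P (n + 1) s a s' * Val H P r π (n + 1 + 1) s'))
    = (∑ s', occup P π s₁ (n + 1) s * (π (n + 1) s a *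
          ((Phat (n + 1) s a s' - P (n + 1) s a s') * Val H Phat r π (n + 1 + 1) s')))
      + ∑ s', occup P π s₁ (n + 1) s * π (n + 1) s a * P (n + 1) s a s' *
          (Val H Phat r π (n + 1 + 1) s' - Val H P r π (n + 1 + 1) s') := by
    intro s a
    rw [← mul_sub, add_sub_add_left_eq_sub, ← Finset.sum_sub_distrib,
        Finset.mul_sum, Finset.mul_sum, ← Finset.sum_add_distrib]
    exact Finset.sum_congr rfl fun s' _ => by ring
  calc ∑ s, occup P π s₁ (n + 1) s *
        (Val H Phat r π (n + 1) s - Val H P r π (n + 1) s)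
      = ∑ s, ∑ a, ((∑ s', occup P π s₁ (n + 1) s * (π (n + 1) s a *
            ((Phat (n + 1) s a s' - P (n + 1) s a s') * Val H Phat r π (n + 1 + 1) s')))
          + ∑ s', occup P π s₁ (n + 1) s * π (n + 1) s a * P (n + 1) s a s' *
            (Val H Phat r π (n + 1 + 1) s' - Val H P r π (n + 1 + 1) s')) := by
        simp only [hb1, hb2, ← Finset.sum_sub_distrib, Finset.mul_sum]
        exact Finset.sum_congr rfl fun s _ => Finset.sum_congr rfl fun a _ => key s a
    _ = _ := by
        simp only [hocc, Finset.sum_add_distrib, Finset.mul_sum, Finset.sum_mul]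
        congr 1
        exact (Finset.sum_congr rfl fun _ _ => Finset.sum_comm).trans Finset.sum_comm

lemma tele_all [Fintype S] [Fintype A] [DecidableEq S] (H : ℕ)
    (P Phat : ℕ → S → A → S → ℝ) (r : ℕ → S → A → ℝ) (π : ℕ → S → A → ℝ)
    (s₁ : S) : ∀ (k m : ℕ), 1 ≤ m → m + k = H →
    ∑ s, occup P π s₁ m s * (Val H Phat r π m s - Val H P r π m s)
      = ∑ h ∈ Finset.Icc m (H - 1), ∑ s, occup P π s₁ h s *
          ∑ a, π h s a *
            ∑ s', (Phat h s a s' - P h s a s') * Val H Phat r π (h + 1) s' := by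
  intro k
  induction k with
  | zero =>
    intro m hm hmH
    have hmH' : m = H := by omega
    subst hmH'
    have : Finset.Icc m (m - 1) = ∅ := by
      rw [Finset.Icc_eq_empty_iff]; omega
    rw [this, Finset.sum_empty]
    have hz : ∀ s : S, Val m Phat r π m s - Val m P r π m s = 0 := by
      intro s; rw [Val_top, Val_top]; ring
    simp [hz]
  | succ k ih =>
    intro m hm hmH
    rw [tele_step H P Phat r π s₁ m hm (by omega),
        ih (m + 1) (by omega) (by omega)]
    have hins : Finset.Icc m (H - 1) = insert m (Finset.Icc (m + 1) (H - 1)) := by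
      ext x; simp only [Finset.mem_Icc, Finset.mem_insert]; omega
    rw [hins, Finset.sum_insert (by simp)]

/-- Performance difference between transition kernels: for a policy π and two kernel
families P and P̂ with the same rewards,
V₁^{π,P̂}(s₁) − V₁^{π,P}(s₁) = E_{π,P}[ ∑_{h=1}^{H−1} ((P̂_h − P_h) • V_{h+1}^{π,P̂})(s_h,a_h) ],
the expectation over trajectories induced by (π, P) from s₁ being written via the induced
state distributions μ_h^{π,P,s₁}. -/
theorem performance_difference_kernels [Fintype S] [Fintype A] [DecidableEq S]
    (H : ℕ) (hH : 1 ≤ H)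
    (P Phat : ℕ → S → A → S → ℝ) (r : ℕ → S → A → ℝ) (π : ℕ → S → A → ℝ) (s₁ : S)
    (hP0 : ∀ h s a s', 0 ≤ P h s a s') (hP1 : ∀ h s a, ∑ s', P h s a s' = 1)
    (hPhat0 : ∀ h s a s', 0 ≤ Phat h s a s') (hPhat1 : ∀ h s a, ∑ s', Phat h s a s' = 1)
    (hπ0 : ∀ h s a, 0 ≤ π h s a) (hπ1 : ∀ h s, ∑ a, π h s a = 1) :
    Val H Phat r π 1 s₁ - Val H P r π 1 s₁ =
      ∑ h ∈ Finset.Icc 1 (H - 1), ∑ s, occup P π s₁ h s *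
        ∑ a, π h s a *
          ∑ s', (Phat h s a s' - P h s a s') * Val H Phat r π (h + 1) s' := by
  have := tele_all H P Phat r π s₁ (H - 1) 1 le_rfl (by omega)
  rw [← this]
  have ho : ∀ s : S, occup P π s₁ 1 s = if s = s₁ then 1 else 0 := fun s => rfl
  simp [ho]
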